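/- Let (M,d) be a metric space and let f be a finitely supported real-valued function on M with zero sum. Then there exists a transportation plan solving f whose cost equals the transportation cost norm ||f||_TC; i.e., the infimum in the definition of the transportation cost norm is attained. -/

import Mathlib

open Finsupp

noncomputable def divL (M : Type*) : ((M × M) →₀ ℝ) →ₗ[ℝ] (M →₀ ℝ) :=
  Finsupp.lsum ℝ fun pq => LinearMap.toSpanSingleton ℝ _ (Finsupp.single pq.1 1 - Finsupp.single pq.2 1)

noncomputable def costL (M : Type*) [MetricSpace M] : ((M × M) →₀ ℝ) →ₗ[ℝ] ℝ :=
  Finsupp.lsum ℝ fun pq => LinearMap.toSpanSingleton ℝ ℝ (dist pq.1 pq.2)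

theorem divL_single {M : Type*} (pq : M × M) (c : ℝ) :
    divL M (Finsupp.single pq c) = c • (Finsupp.single pq.1 1 - Finsupp.single pq.2 1) := by
  simp [divL, LinearMap.toSpanSingleton_apply]

theorem costL_single {M : Type*} [MetricSpace M] (pq : M × M) (c : ℝ) :
    costL M (Finsupp.single pq c) = c * dist pq.1 pq.2 := by
  simp [costL, LinearMap.toSpanSingleton_apply, smul_eq_mul]

theorem divL_eq_sum {M : Type*} (W : (M × M) →₀ ℝ) :
    divL M W = ∑ pq ∈ W.support, W pq • (Finsupp.single pq.1 1 - Finsupp.single pq.2 1) := by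
  rw [divL, Finsupp.lsum_apply]; rfl

theorem costL_eq_sum {M : Type*} [MetricSpace M] (W : (M × M) →₀ ℝ) :
    costL M W = ∑ pq ∈ W.support, W pq * dist pq.1 pq.2 := by
  rw [costL, Finsupp.lsum_apply]; rfl

theorem divL_apply {M : Type*} [DecidableEq M] (W : (M × M) →₀ ℝ) (v : M) :
    divL M W v = (∑ pq ∈ W.support, if pq.1 = v then W pq else 0)
      - ∑ pq ∈ W.support, if pq.2 = v then W pq else 0 := by
  rw [divL_eq_sum, Finsupp.finset_sum_apply, ← Finset.sum_sub_distrib]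
  refine Finset.sum_congr rfl fun pq _ => ?_
  simp only [Finsupp.smul_apply, Finsupp.sub_apply, Finsupp.single_apply, smul_eq_mul, mul_sub]
  split_ifs <;> ring

theorem fnonneg_iff {ι : Type*} {W : ι →₀ ℝ} : 0 ≤ W ↔ ∀ r, 0 ≤ W r := by
  rw [Finsupp.le_def]; simp

theorem costL_nonneg {M : Type*} [MetricSpace M] (W : (M × M) →₀ ℝ) (hW : 0 ≤ W) :
    0 ≤ costL M W := by
  rw [costL_eq_sum]
  exact Finset.sum_nonneg fun pq _ => mul_nonneg (hW pq) dist_nonneg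

/-- The finite set of points occurring in the support of `W`. -/
noncomputable def pts {M : Type*} [DecidableEq M] (W : (M × M) →₀ ℝ) : Finset M :=
  W.support.image Prod.fst ∪ W.support.image Prod.snd

theorem fst_mem_pts {M : Type*} [DecidableEq M] {W : (M × M) →₀ ℝ} {pq : M × M} (h : pq ∈ W.support) :
    pq.1 ∈ pts W := Finset.mem_union_left _ (Finset.mem_image_of_mem _ h)

theorem snd_mem_pts {M : Type*} [DecidableEq M] {W : (M × M) →₀ ℝ} {pq : M × M} (h : pq ∈ W.support) :
    pq.2 ∈ pts W := Finset.mem_union_right _ (Finset.mem_image_of_mem _ h)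
theorem reroute {M : Type*} [MetricSpace M] [DecidableEq M] (W : (M × M) →₀ ℝ) (hW : 0 ≤ W)
    (p v q : M) (hp : p ≠ v) (hq : q ≠ v)
    (hpv : (p, v) ∈ W.support) (hvq : (v, q) ∈ W.support) :
    ∃ W' : (M × M) →₀ ℝ, 0 ≤ W' ∧ divL M W' = divL M W ∧ costL M W' ≤ costL M W ∧
      W'.support ⊆ insert (p, q) W.support ∧
      (W'.support.filter (fun pq => pq.1 = v ∨ pq.2 = v)).card <
        (W.support.filter (fun pq => pq.1 = v ∨ pq.2 = v)).card := by
  set α := W (p, v) with hα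
  set β := W (v, q) with hβ
  set m := min α β with hm
  have hα0 : 0 < α := lt_of_le_of_ne (hW (p, v)) (Ne.symm (Finsupp.mem_support_iff.mp hpv))
  have hβ0 : 0 < β := lt_of_le_of_ne (hW (v, q)) (Ne.symm (Finsupp.mem_support_iff.mp hvq))
  have hm0 : 0 < m := lt_min hα0 hβ0
  have d1 : ((p, v) : M × M) ≠ (v, q) := fun h => hp (congrArg Prod.fst h)
  have d2 : ((p, q) : M × M) ≠ (p, v) := fun h => hq (congrArg Prod.snd h)
  have d3 : ((p, q) : M × M) ≠ (v, q) := fun h => hp (congrArg Prod.fst h)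
  set W' : (M × M) →₀ ℝ :=
    W + Finsupp.single (p, q) m - Finsupp.single (p, v) m - Finsupp.single (v, q) m with hW'
  have happ : ∀ r, W' r = W r + (if (p, q) = r then m else 0)
      - (if (p, v) = r then m else 0) - (if (v, q) = r then m else 0) := by
    intro r
    simp [hW', Finsupp.single_apply]
  have hnn : 0 ≤ W' := by
    rw [fnonneg_iff]
    intro r
    rw [happ r]
    by_cases h2 : ((p, v) : M × M) = r
    · subst h2
      rw [if_neg d2, if_pos rfl, if_neg (Ne.symm d1)]
      have h1 : m ≤ α := min_le_left α β
      linarith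
    · by_cases h3 : ((v, q) : M × M) = r
      · subst h3
        rw [if_neg d3, if_neg d1, if_pos rfl]
        have h1 : m ≤ β := min_le_right α β
        linarith
      · rw [if_neg h2, if_neg h3]
        by_cases h1 : ((p, q) : M × M) = r
        · rw [if_pos h1]
          have h0 : (0:ℝ) ≤ W r := hW r
          linarith
        · rw [if_neg h1]
          have h0 : (0:ℝ) ≤ W r := hW r
          simpa using h0
  refine ⟨W', hnn, ?_, ?_, ?_, ?_⟩
  · rw [hW']
    simp only [map_add, map_sub, divL_single]
    simp only [smul_sub]
    abel
  · rw [hW']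
    simp only [map_add, map_sub, costL_single]
    have ht := dist_triangle p v q
    nlinarith [hm0.le]
  · intro r hr
    rw [Finsupp.mem_support_iff] at hr
    by_cases h : r ∈ W.support
    · exact Finset.mem_insert_of_mem h
    · by_cases h1 : ((p, q) : M × M) = r
      · exact h1 ▸ Finset.mem_insert_self _ _
      · exfalso
        apply hr
        rw [happ r, Finsupp.notMem_support_iff.mp h, if_neg h1,
          if_neg (fun h2 : ((p,v) : M × M) = r => h (h2 ▸ hpv)), if_neg (fun h3 : ((v,q) : M × M) = r => h (h3 ▸ hvq))]
        ring
  · set bad : M × M := if α ≤ β then (p, v) else (v, q) with hbad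
    have hbadmem : bad ∈ W.support.filter (fun pq => pq.1 = v ∨ pq.2 = v) := by
      rw [hbad]
      split_ifs
      · exact Finset.mem_filter.mpr ⟨hpv, Or.inr rfl⟩
      · exact Finset.mem_filter.mpr ⟨hvq, Or.inl rfl⟩
    have hsub : W'.support.filter (fun pq => pq.1 = v ∨ pq.2 = v) ⊆
        (W.support.filter (fun pq => pq.1 = v ∨ pq.2 = v)).erase bad := by
      intro r hr
      rw [Finset.mem_filter] at hr
      obtain ⟨hrs, hrt⟩ := hr
      have hrne : W' r ≠ 0 := Finsupp.mem_support_iff.mp hrs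
      have hrpq : ((p, q) : M × M) ≠ r := by
        rintro rfl
        rcases hrt with h | h
        · exact hp h
        · exact hq h
      rw [Finset.mem_erase]
      by_cases h2 : ((p, v) : M × M) = r
      · subst h2
        have hαβ : ¬ α ≤ β := by
          intro hle
          apply hrne
          rw [happ, if_neg d2, if_pos rfl, if_neg (Ne.symm d1), hm, min_eq_left hle]
          ring
        refine ⟨?_, Finset.mem_filter.mpr ⟨hpv, hrt⟩⟩
        rw [hbad, if_neg hαβ]
        exact d1
      · by_cases h3 : ((v, q) : M × M) = r
        · subst h3
          have hαβ : α ≤ β := by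
            by_contra hle
            apply hrne
            rw [happ, if_neg d3, if_neg d1, if_pos rfl, hm,
              min_eq_right (le_of_not_ge hle)]
            ring
          refine ⟨?_, Finset.mem_filter.mpr ⟨hvq, hrt⟩⟩
          rw [hbad, if_pos hαβ]
          exact Ne.symm d1
        · have hWr : W r ≠ 0 := by
            intro h0
            apply hrne
            rw [happ, h0, if_neg hrpq, if_neg h2, if_neg h3]
            ring
          refine ⟨?_, Finset.mem_filter.mpr ⟨Finsupp.mem_support_iff.mpr hWr, hrt⟩⟩
          rw [hbad]
          split_ifs
          · exact fun h => h2 h.symm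
          · exact fun h => h3 h.symm
    calc (W'.support.filter (fun pq => pq.1 = v ∨ pq.2 = v)).card
        ≤ ((W.support.filter (fun pq => pq.1 = v ∨ pq.2 = v)).erase bad).card :=
          Finset.card_le_card hsub
      _ < _ := Finset.card_erase_lt_of_mem hbadmem
theorem pts_subset_of_support_subset {M : Type*} [DecidableEq M] {W' W : (M × M) →₀ ℝ}
    {p q : M} (h : W'.support ⊆ insert (p, q) W.support)
    (hp : p ∈ pts W) (hq : q ∈ pts W) : pts W' ⊆ pts W := by
  intro u hu
  rcases Finset.mem_union.mp hu with h1 | h1 <;> obtain ⟨r, hr, rfl⟩ := Finset.mem_image.mp h1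
  · rcases Finset.mem_insert.mp (h hr) with h2 | hr2
    · rw [h2]; exact hp
    · exact fst_mem_pts hr2
  · rcases Finset.mem_insert.mp (h hr) with h2 | hr2
    · rw [h2]; exact hq
    · exact snd_mem_pts hr2

theorem elimPoint {M : Type*} [MetricSpace M] [DecidableEq M] (v : M) :
    ∀ (n : ℕ) (W : (M × M) →₀ ℝ), 0 ≤ W → divL M W v = 0 →
    (W.support.filter (fun pq => pq.1 = v ∨ pq.2 = v)).card ≤ n →
    ∃ W', 0 ≤ W' ∧ divL M W' = divL M W ∧ costL M W' ≤ costL M W ∧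
      pts W' ⊆ pts W ∧ ∀ pq ∈ W'.support, pq.1 ≠ v ∧ pq.2 ≠ v := by
  intro n
  induction n with
  | zero =>
    intro W hW hv hcard
    refine ⟨W, hW, rfl, le_refl _, subset_rfl, fun pq hpq => ?_⟩
    have : W.support.filter (fun pq => pq.1 = v ∨ pq.2 = v) = ∅ :=
      Finset.card_eq_zero.mp (Nat.le_zero.mp hcard)
    have h2 := Finset.filter_eq_empty_iff.mp this hpq
    push_neg at h2
    exact h2
  | succ n ih =>
    intro W hW hv hcard
    by_cases hemp : W.support.filter (fun pq => pq.1 = v ∨ pq.2 = v) = ∅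
    · refine ⟨W, hW, rfl, le_refl _, subset_rfl, fun pq hpq => ?_⟩
      have h2 := Finset.filter_eq_empty_iff.mp hemp hpq
      push_neg at h2
      exact h2
    · obtain ⟨r, hr⟩ := Finset.nonempty_of_ne_empty hemp
      have hrs := (Finset.mem_filter.mp hr).1
      have hrt := (Finset.mem_filter.mp hr).2
      by_cases hvv : ((v, v) : M × M) ∈ W.support
      · -- erase the diagonal entry at (v,v)
        set W₁ := W.erase (v, v) with hW₁
        have hdecomp : W₁ + Finsupp.single (v, v) (W (v, v)) = W :=
          Finsupp.erase_add_single (v, v) W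
        have hdiv : divL M W₁ = divL M W := by
          conv_rhs => rw [← hdecomp]
          rw [map_add, divL_single]
          simp
        have hcost : costL M W₁ = costL M W := by
          conv_rhs => rw [← hdecomp]
          rw [map_add, costL_single]
          simp
        have hnn : 0 ≤ W₁ := by
          rw [fnonneg_iff]
          intro s
          rw [hW₁, Finsupp.erase_apply]
          split_ifs
          · exact le_refl _
          · exact hW s
        have hsupp : W₁.support = W.support.erase (v, v) := Finsupp.support_erase
        have hsub : W₁.support.filter (fun pq => pq.1 = v ∨ pq.2 = v) ⊆
            (W.support.filter (fun pq => pq.1 = v ∨ pq.2 = v)).erase (v, v) := by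
          intro s hs
          rw [Finset.mem_filter, hsupp, Finset.mem_erase] at hs
          exact Finset.mem_erase.mpr ⟨hs.1.1, Finset.mem_filter.mpr ⟨hs.1.2, hs.2⟩⟩
        have hvvf : ((v, v) : M × M) ∈ W.support.filter (fun pq => pq.1 = v ∨ pq.2 = v) :=
          Finset.mem_filter.mpr ⟨hvv, Or.inl rfl⟩
        have hcard1 : (W₁.support.filter (fun pq => pq.1 = v ∨ pq.2 = v)).card ≤ n := by
          have := Finset.card_le_card hsub
          have h2 := Finset.card_erase_lt_of_mem hvvf
          omega
        obtain ⟨W', h1, h2, h3, h4, h5⟩ := ih W₁ hnn (by rw [hdiv]; exact hv) hcard1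
        refine ⟨W', h1, h2.trans hdiv, h3.trans_eq hcost, h4.trans ?_, h5⟩
        intro u hu
        rcases Finset.mem_union.mp hu with h6 | h6 <;>
          obtain ⟨s, hs, rfl⟩ := Finset.mem_image.mp h6
        · exact fst_mem_pts (Finset.mem_of_mem_erase (hsupp ▸ hs))
        · exact snd_mem_pts (Finset.mem_of_mem_erase (hsupp ▸ hs))
      · -- no diagonal at v; find an in-pair and an out-pair and reroute
        set O := ∑ pq ∈ W.support, if pq.1 = v then W pq else 0 with hO
        set I := ∑ pq ∈ W.support, if pq.2 = v then W pq else 0 with hI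
        have hOI : O = I := by
          have := divL_apply W v
          rw [hv] at this
          linarith [this.symm]
        have hOpos : 0 < O := by
          rcases hrt with h1 | h1
          · calc (0:ℝ) < W r :=
                lt_of_le_of_ne (hW r) (Ne.symm (Finsupp.mem_support_iff.mp hrs))
              _ = if r.1 = v then W r else 0 := by rw [if_pos h1]
              _ ≤ O := Finset.single_le_sum
                  (f := fun pq => if pq.1 = v then W pq else 0)
                  (fun i _ => by split_ifs; exacts [hW i, le_refl _]) hrs
          · rw [hOI]
            calc (0:ℝ) < W r :=
                lt_of_le_of_ne (hW r) (Ne.symm (Finsupp.mem_support_iff.mp hrs))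
              _ = if r.2 = v then W r else 0 := by rw [if_pos h1]
              _ ≤ I := Finset.single_le_sum
                  (f := fun pq => if pq.2 = v then W pq else 0)
                  (fun i _ => by split_ifs; exacts [hW i, le_refl _]) hrs
        have hout : ∃ q, q ≠ v ∧ (v, q) ∈ W.support := by
          by_contra hcon
          push_neg at hcon
          have : O = 0 := by
            rw [hO]
            refine Finset.sum_eq_zero fun pq hpq => ?_
            rw [if_neg]
            intro h1
            have hpq' : pq = (v, pq.2) := Prod.ext h1 rfl
            by_cases h2 : pq.2 = v
            · exact hvv ((Prod.ext h1 h2 : pq = (v, v)) ▸ hpq)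
            · exact (hcon pq.2 h2) (hpq' ▸ hpq)
          linarith
        have hin : ∃ p, p ≠ v ∧ (p, v) ∈ W.support := by
          by_contra hcon
          push_neg at hcon
          have : I = 0 := by
            rw [hI]
            refine Finset.sum_eq_zero fun pq hpq => ?_
            rw [if_neg]
            intro h1
            have hpq' : pq = (pq.1, v) := Prod.ext rfl h1
            by_cases h2 : pq.1 = v
            · exact hvv ((Prod.ext h2 h1 : pq = (v, v)) ▸ hpq)
            · exact (hcon pq.1 h2) (hpq' ▸ hpq)
          rw [hOI] at hOpos
          linarith
        obtain ⟨q, hq, hvq⟩ := hout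
        obtain ⟨p, hp, hpv⟩ := hin
        obtain ⟨W₂, g1, g2, g3, g4, g5⟩ := reroute W hW p v q hp hq hpv hvq
        have hcard2 : (W₂.support.filter (fun pq => pq.1 = v ∨ pq.2 = v)).card ≤ n := by
          omega
        obtain ⟨W', h1, h2, h3, h4, h5⟩ := ih W₂ g1 (by rw [g2]; exact hv) hcard2
        exact ⟨W', h1, h2.trans g2, h3.trans g3,
          h4.trans (pts_subset_of_support_subset g4 (fst_mem_pts hpv) (snd_mem_pts hvq)), h5⟩
theorem elimAll {M : Type*} [MetricSpace M] [DecidableEq M] (f : M →₀ ℝ) :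
    ∀ (k : ℕ) (W : (M × M) →₀ ℝ), 0 ≤ W → divL M W = f → (pts W \ f.support).card ≤ k →
    ∃ W', 0 ≤ W' ∧ divL M W' = f ∧ costL M W' ≤ costL M W ∧ ∀ u ∈ pts W', u ∈ f.support := by
  intro k
  induction k with
  | zero =>
    intro W hW hdiv hcard
    have hemp : pts W \ f.support = ∅ := Finset.card_eq_zero.mp (Nat.le_zero.mp hcard)
    refine ⟨W, hW, hdiv, le_refl _, fun u hu => ?_⟩
    by_contra hus
    exact (Finset.eq_empty_iff_forall_notMem.mp hemp u) (Finset.mem_sdiff.mpr ⟨hu, hus⟩)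
  | succ k ih =>
    intro W hW hdiv hcard
    by_cases hemp : pts W \ f.support = ∅
    · refine ⟨W, hW, hdiv, le_refl _, fun u hu => ?_⟩
      by_contra hus
      exact (Finset.eq_empty_iff_forall_notMem.mp hemp u) (Finset.mem_sdiff.mpr ⟨hu, hus⟩)
    · obtain ⟨v, hv⟩ := Finset.nonempty_of_ne_empty hemp
      rw [Finset.mem_sdiff] at hv
      have hfv : divL M W v = 0 := by
        rw [hdiv]
        exact Finsupp.notMem_support_iff.mp hv.2
      obtain ⟨W₂, g1, g2, g3, g4, g5⟩ := elimPoint v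
        ((W.support.filter (fun pq => pq.1 = v ∨ pq.2 = v)).card) W hW hfv (le_refl _)
      have hvpts : v ∉ pts W₂ := by
        intro hvp
        rcases Finset.mem_union.mp hvp with h1 | h1 <;>
          obtain ⟨s, hs, hseq⟩ := Finset.mem_image.mp h1
        · exact (g5 s hs).1 hseq
        · exact (g5 s hs).2 hseq
      have hsub : pts W₂ \ f.support ⊆ (pts W \ f.support).erase v := by
        intro u hu
        rw [Finset.mem_sdiff] at hu
        refine Finset.mem_erase.mpr ⟨fun h => hvpts (h ▸ hu.1), ?_⟩
        exact Finset.mem_sdiff.mpr ⟨g4 hu.1, hu.2⟩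
      have hcard2 : (pts W₂ \ f.support).card ≤ k := by
        have h1 := Finset.card_le_card hsub
        have h2 := Finset.card_erase_lt_of_mem (Finset.mem_sdiff.mpr hv)
        omega
      obtain ⟨W', h1, h2, h3, h4⟩ := ih W₂ g1 (g2.trans hdiv) hcard2
      exact ⟨W', h1, h2, h3.trans g3, h4⟩

theorem diag_divL_costL {M : Type*} [MetricSpace M] (W : (M × M) →₀ ℝ)
    (h : ∀ pq ∈ W.support, pq.1 = pq.2) : divL M W = 0 ∧ costL M W = 0 := by
  constructor
  · rw [divL_eq_sum]
    refine Finset.sum_eq_zero fun pq hpq => ?_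
    rw [h pq hpq, sub_self, smul_zero]
  · rw [costL_eq_sum]
    refine Finset.sum_eq_zero fun pq hpq => ?_
    rw [← h pq hpq]
    rw [dist_self, mul_zero]

theorem reduce {M : Type*} [MetricSpace M] [DecidableEq M] (f : M →₀ ℝ)
    (W : (M × M) →₀ ℝ) (hW : 0 ≤ W) (hdiv : divL M W = f) :
    ∃ W', 0 ≤ W' ∧ divL M W' = f ∧ costL M W' ≤ costL M W ∧
      ∀ pq ∈ W'.support, pq.1 ∈ f.support ∧ pq.2 ∈ f.support ∧ pq.1 ≠ pq.2 := by
  obtain ⟨W₁, h1, h2, h3, h4⟩ := elimAll f (pts W \ f.support).card W hW hdiv (le_refl _)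
  set Wd := W₁.filter (fun pq => pq.1 ≠ pq.2) with hWd
  set We := W₁.filter (fun pq => ¬ pq.1 ≠ pq.2) with hWe
  have hsplit : Wd + We = W₁ := by
    ext r
    rw [Finsupp.add_apply, hWd, hWe, Finsupp.filter_apply, Finsupp.filter_apply]
    by_cases h : r.1 ≠ r.2
    · rw [if_pos h, if_neg (not_not_intro h), add_zero]
    · rw [if_neg h, if_pos h, zero_add]
  have hdiag : ∀ pq ∈ We.support, pq.1 = pq.2 := by
    intro pq hpq
    rw [hWe, Finsupp.support_filter, Finset.mem_filter] at hpq
    exact not_not.mp hpq.2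
  obtain ⟨hdz, hcz⟩ := diag_divL_costL We hdiag
  have hWdsupp : ∀ pq ∈ Wd.support, pq ∈ W₁.support ∧ pq.1 ≠ pq.2 := by
    intro pq hpq
    rw [hWd, Finsupp.support_filter, Finset.mem_filter] at hpq
    exact hpq
  refine ⟨Wd, ?_, ?_, ?_, ?_⟩
  · rw [fnonneg_iff]
    intro r
    rw [hWd, Finsupp.filter_apply]
    split_ifs
    · exact h1 r
    · exact le_refl _
  · have := congrArg (divL M) hsplit
    rw [map_add, hdz, add_zero] at this
    rw [this, h2]
  · have := congrArg (costL M) hsplit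
    rw [map_add, hcz, add_zero] at this
    rw [this]
    exact h3
  · intro pq hpq
    obtain ⟨hm, hne⟩ := hWdsupp pq hpq
    exact ⟨h4 _ (fst_mem_pts hm), h4 _ (snd_mem_pts hm), hne⟩
theorem exists_W_of_plan {M : Type*} [MetricSpace M] (n : ℕ) (a : Fin n → ℝ)
    (x y : Fin n → M) (ha : ∀ i, 0 ≤ a i) :
    ∃ W : (M × M) →₀ ℝ, 0 ≤ W ∧
      divL M W = ∑ i, a i • (Finsupp.single (x i) 1 - Finsupp.single (y i) 1) ∧
      costL M W = ∑ i, a i * dist (x i) (y i) := by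
  classical
  refine ⟨∑ i, Finsupp.single (x i, y i) (a i), ?_, ?_, ?_⟩
  · rw [fnonneg_iff]
    intro r
    rw [Finsupp.finset_sum_apply]
    refine Finset.sum_nonneg fun i _ => ?_
    rw [Finsupp.single_apply]
    split_ifs
    · exact ha i
    · exact le_refl _
  · rw [map_sum]
    refine Finset.sum_congr rfl fun i _ => ?_
    rw [divL_single]
  · rw [map_sum]
    refine Finset.sum_congr rfl fun i _ => ?_
    rw [costL_single]

theorem exists_plan_of_W {M : Type*} [MetricSpace M] (W : (M × M) →₀ ℝ) (hW : 0 ≤ W) :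
    ∃ (n : ℕ) (a : Fin n → ℝ) (x y : Fin n → M), (∀ i, 0 ≤ a i) ∧
      (∑ i, a i • (Finsupp.single (x i) 1 - Finsupp.single (y i) 1) : M →₀ ℝ) = divL M W ∧
      ∑ i, a i * dist (x i) (y i) = costL M W := by
  set e := W.support.equivFin.symm with he
  refine ⟨W.support.card, fun i => W (e i), fun i => (e i : M × M).1, fun i => (e i : M × M).2,
    fun i => hW _, ?_, ?_⟩
  · rw [divL_eq_sum, ← Finset.sum_coe_sort W.support
      (fun pq => W pq • (Finsupp.single pq.1 1 - Finsupp.single pq.2 1))]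
    exact (Equiv.sum_comp e
      (fun s => W (s : M × M) • (Finsupp.single (s : M × M).1 1 - Finsupp.single (s : M × M).2 1)))
  · rw [costL_eq_sum, ← Finset.sum_coe_sort W.support (fun pq => W pq * dist pq.1 pq.2)]
    exact (Equiv.sum_comp e (fun s => W (s : M × M) * dist (s : M × M).1 (s : M × M).2))
theorem exists_canonical {M : Type*} [MetricSpace M] (f : M →₀ ℝ)
    (hf : f.sum (fun _ r => r) = 0) :
    ∃ W₀ : (M × M) →₀ ℝ, 0 ≤ W₀ ∧ divL M W₀ = f := by
  classical
  rcases Finset.eq_empty_or_nonempty f.support with hemp | ⟨x₀, hx₀⟩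
  · refine ⟨0, le_refl _, ?_⟩
    rw [map_zero, (Finsupp.support_eq_empty.mp hemp)]
  · refine ⟨∑ u ∈ f.support,
      if 0 < f u then Finsupp.single (u, x₀) (f u) else Finsupp.single (x₀, u) (-(f u)),
      ?_, ?_⟩
    · rw [fnonneg_iff]
      intro r
      rw [Finsupp.finset_sum_apply]
      refine Finset.sum_nonneg fun u hu => ?_
      split_ifs with h
      · rw [Finsupp.single_apply]
        split_ifs
        · exact h.le
        · exact le_refl _
      · rw [Finsupp.single_apply]
        split_ifs
        · push_neg at h; linarith
        · exact le_refl _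
    · rw [map_sum]
      have hterm : ∀ u ∈ f.support,
          divL M (if 0 < f u then Finsupp.single (u, x₀) (f u)
            else Finsupp.single (x₀, u) (-(f u)))
          = Finsupp.single u (f u) - (f u) • Finsupp.single x₀ 1 := by
        intro u _
        split_ifs with h
        · rw [divL_single]
          rw [smul_sub]
          congr 1
          rw [Finsupp.smul_single', mul_one]
        · rw [divL_single, smul_sub, neg_smul, neg_smul, sub_neg_eq_add]
          show (-((f u) • (Finsupp.single x₀ 1)) + (f u) • (Finsupp.single u 1) : M →₀ ℝ) = _
          rw [Finsupp.smul_single', Finsupp.smul_single']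
          simp only [mul_one]
          abel
      rw [Finset.sum_congr rfl hterm, Finset.sum_sub_distrib, ← Finset.sum_smul]
      have hs : ∑ u ∈ f.support, f u = 0 := hf
      rw [hs, zero_smul, sub_zero]
      exact Finsupp.sum_single f
noncomputable def toW {M : Type*} (S : Finset M) (φ : ↥S × ↥S → ℝ) : (M × M) →₀ ℝ :=
  ∑ p : ↥S × ↥S, Finsupp.single ((p.1 : M), (p.2 : M)) (φ p)

theorem toW_apply {M : Type*} [DecidableEq M] (S : Finset M) (φ : ↥S × ↥S → ℝ) (r : M × M) :
    toW S φ r = if h : r.1 ∈ S ∧ r.2 ∈ S then φ (⟨r.1, h.1⟩, ⟨r.2, h.2⟩) else 0 := by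
  rw [toW, Finsupp.finset_sum_apply]
  split_ifs with h
  · rw [Finset.sum_eq_single ((⟨r.1, h.1⟩, ⟨r.2, h.2⟩) : ↥S × ↥S)]
    · rw [Finsupp.single_apply, if_pos]
      rfl
    · intro p _ hne
      rw [Finsupp.single_apply, if_neg]
      intro he
      apply hne
      have h1 : (p.1 : M) = r.1 := congrArg Prod.fst he
      have h2 : (p.2 : M) = r.2 := congrArg Prod.snd he
      exact Prod.ext (Subtype.ext h1) (Subtype.ext h2)
    · intro hmem
      exact absurd (Finset.mem_univ _) hmem
  · refine Finset.sum_eq_zero fun p _ => ?_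
    rw [Finsupp.single_apply, if_neg]
    intro he
    exact h ⟨(congrArg Prod.fst he) ▸ (p.1).2, (congrArg Prod.snd he) ▸ (p.2).2⟩

theorem toW_nonneg {M : Type*} [DecidableEq M] (S : Finset M) (φ : ↥S × ↥S → ℝ)
    (hφ : ∀ p, 0 ≤ φ p) : 0 ≤ toW S φ := by
  rw [fnonneg_iff]
  intro r
  rw [toW_apply]
  split_ifs
  · exact hφ _
  · exact le_refl _

theorem divL_toW {M : Type*} [MetricSpace M] (S : Finset M) (φ : ↥S × ↥S → ℝ) :
    divL M (toW S φ) =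
      ∑ p : ↥S × ↥S, φ p • (Finsupp.single (p.1 : M) 1 - Finsupp.single (p.2 : M) 1) := by
  rw [toW, map_sum]
  exact Finset.sum_congr rfl fun p _ => divL_single _ _

theorem costL_toW {M : Type*} [MetricSpace M] (S : Finset M) (φ : ↥S × ↥S → ℝ) :
    costL M (toW S φ) = ∑ p : ↥S × ↥S, φ p * dist (p.1 : M) (p.2 : M) := by
  rw [toW, map_sum]
  exact Finset.sum_congr rfl fun p _ => costL_single _ _

theorem exists_restrict {M : Type*} [DecidableEq M] (S : Finset M) (W : (M × M) →₀ ℝ)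
    (hsupp : ∀ pq ∈ W.support, pq.1 ∈ S ∧ pq.2 ∈ S) :
    ∃ φ : ↥S × ↥S → ℝ, toW S φ = W ∧ ∀ p, φ p = W ((p.1 : M), (p.2 : M)) := by
  refine ⟨fun p => W ((p.1 : M), (p.2 : M)), ?_, fun p => rfl⟩
  ext r
  rw [toW_apply]
  split_ifs with h
  · rfl
  · rcases eq_or_ne (W r) 0 with h0 | h0
    · rw [h0]
    · exact absurd (hsupp r (Finsupp.mem_support_iff.mpr h0)) h

theorem exists_min_flow {M : Type*} [MetricSpace M] [DecidableEq M] (f : M →₀ ℝ)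
    (hf : f.sum (fun _ r => r) = 0) :
    ∃ W₀ : (M × M) →₀ ℝ, 0 ≤ W₀ ∧ divL M W₀ = f ∧
      ∀ W, 0 ≤ W → divL M W = f → costL M W₀ ≤ costL M W := by
  obtain ⟨Wc, hc1, hc2⟩ := exists_canonical f hf
  obtain ⟨W₁, e1, e2, e3, e4⟩ := reduce f Wc hc1 hc2
  set S := f.support with hS
  set C₀ := costL M W₁ with hC₀
  set K : Set (↥S × ↥S → ℝ) := {φ | (∀ p, 0 ≤ φ p) ∧ divL M (toW S φ) = f ∧
    (∀ i : ↥S, φ (i, i) = 0) ∧ costL M (toW S φ) ≤ C₀} with hK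
  have hcost : Continuous (fun φ : ↥S × ↥S → ℝ => costL M (toW S φ)) := by
    have he : (fun φ : ↥S × ↥S → ℝ => costL M (toW S φ))
        = fun φ => ∑ p : ↥S × ↥S, φ p * dist (p.1 : M) (p.2 : M) := funext (costL_toW S)
    rw [he]
    exact continuous_finset_sum _ fun p _ => (continuous_apply p).mul continuous_const
  have hKc : IsClosed K := by
    have h1 : IsClosed {φ : ↥S × ↥S → ℝ | ∀ p, 0 ≤ φ p} := by
      have he : {φ : ↥S × ↥S → ℝ | ∀ p, 0 ≤ φ p} = ⋂ p, {φ | 0 ≤ φ p} := by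
        ext φ; simp
      rw [he]
      exact isClosed_iInter fun p => isClosed_le continuous_const (continuous_apply p)
    have h2 : IsClosed {φ : ↥S × ↥S → ℝ | divL M (toW S φ) = f} := by
      have he : {φ : ↥S × ↥S → ℝ | divL M (toW S φ) = f}
          = ⋂ v : M, {φ | divL M (toW S φ) v = f v} := by
        ext φ
        simp only [Set.mem_setOf_eq, Set.mem_iInter]
        exact ⟨fun h v => by rw [h], fun h => Finsupp.ext h⟩
      rw [he]
      refine isClosed_iInter fun v => isClosed_eq ?_ continuous_const
      have he2 : (fun φ : ↥S × ↥S → ℝ => divL M (toW S φ) v)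
          = fun φ => ∑ p : ↥S × ↥S,
              φ p * ((Finsupp.single (p.1 : M) 1 - Finsupp.single (p.2 : M) 1 : M →₀ ℝ) v) := by
        funext φ
        rw [divL_toW, Finsupp.finset_sum_apply]
        exact Finset.sum_congr rfl fun p _ => by rw [Finsupp.smul_apply, smul_eq_mul]
      rw [he2]
      exact continuous_finset_sum _ fun p _ => (continuous_apply p).mul continuous_const
    have h3 : IsClosed {φ : ↥S × ↥S → ℝ | ∀ i : ↥S, φ (i, i) = 0} := by
      have he : {φ : ↥S × ↥S → ℝ | ∀ i : ↥S, φ (i, i) = 0}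
          = ⋂ i : ↥S, {φ | φ (i, i) = 0} := by
        ext φ; simp
      rw [he]
      exact isClosed_iInter fun i => isClosed_eq (continuous_apply _) continuous_const
    have h4 : IsClosed {φ : ↥S × ↥S → ℝ | costL M (toW S φ) ≤ C₀} :=
      isClosed_le hcost continuous_const
    have he : K = {φ : ↥S × ↥S → ℝ | ∀ p, 0 ≤ φ p} ∩
        ({φ | divL M (toW S φ) = f} ∩
          ({φ : ↥S × ↥S → ℝ | ∀ i : ↥S, φ (i, i) = 0} ∩ {φ | costL M (toW S φ) ≤ C₀})) := by
      ext φ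
      simp only [hK, Set.mem_setOf_eq, Set.mem_inter_iff]
    rw [he]
    exact h1.inter (h2.inter (h3.inter h4))
  set B : ↥S × ↥S → ℝ :=
    fun p => if (p.1 : M) = (p.2 : M) then 0 else C₀ / dist (p.1 : M) (p.2 : M) with hB
  have hKB : K ⊆ Set.Icc 0 B := by
    intro φ hφ
    obtain ⟨ha, hb, hc, hd⟩ := hφ
    rw [Set.mem_Icc]
    constructor
    · intro p
      exact ha p
    · intro p
      rw [hB]
      dsimp only
      split_ifs with h
      · have h12 : p.2 = p.1 := Subtype.ext h.symm
        have : φ (p.1, p.2) = 0 := by rw [h12]; exact hc p.1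
        exact le_of_eq this
      · have hd0 : (0:ℝ) < dist (p.1 : M) (p.2 : M) := dist_pos.mpr h
        have hle : φ p * dist (p.1 : M) (p.2 : M) ≤ C₀ := by
          refine le_trans ?_ hd
          rw [costL_toW]
          exact Finset.single_le_sum
            (f := fun q : ↥S × ↥S => φ q * dist (q.1 : M) (q.2 : M))
            (fun q _ => mul_nonneg (ha q) dist_nonneg) (Finset.mem_univ p)
        exact (le_div_iff₀ hd0).mpr hle
  have hKcpt : IsCompact K := IsCompact.of_isClosed_subset isCompact_Icc hKc hKB
  obtain ⟨φ₁, hφ₁W, hφ₁val⟩ :=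
    exists_restrict S W₁ (fun pq h => ⟨(e4 pq h).1, (e4 pq h).2.1⟩)
  have hφ₁K : φ₁ ∈ K := by
    refine ⟨fun p => by rw [hφ₁val]; exact e1 _, by rw [hφ₁W]; exact e2, ?_, ?_⟩
    · intro i
      rw [hφ₁val]
      rcases eq_or_ne (W₁ ((i : M), (i : M))) 0 with h0 | h0
      · exact h0
      · exact absurd rfl (e4 _ (Finsupp.mem_support_iff.mpr h0)).2.2
    · rw [hφ₁W]
  obtain ⟨φs, hφsK, hmin⟩ := hKcpt.exists_isMinOn ⟨φ₁, hφ₁K⟩ hcost.continuousOn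
  obtain ⟨hs1, hs2, hs3, hs4⟩ := hφsK
  refine ⟨toW S φs, toW_nonneg S φs hs1, hs2, ?_⟩
  intro W hW hdivW
  obtain ⟨W₂, k1, k2, k3, k4⟩ := reduce f W hW hdivW
  obtain ⟨φ₂, hφ₂W, hφ₂val⟩ :=
    exists_restrict S W₂ (fun pq h => ⟨(k4 pq h).1, (k4 pq h).2.1⟩)
  by_cases hcase : costL M W₂ ≤ C₀
  · have hφ₂K : φ₂ ∈ K := by
      refine ⟨fun p => by rw [hφ₂val]; exact k1 _, by rw [hφ₂W]; exact k2, ?_, ?_⟩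
      · intro i
        rw [hφ₂val]
        rcases eq_or_ne (W₂ ((i : M), (i : M))) 0 with h0 | h0
        · exact h0
        · exact absurd rfl (k4 _ (Finsupp.mem_support_iff.mpr h0)).2.2
      · rw [hφ₂W]; exact hcase
    have := isMinOn_iff.mp hmin φ₂ hφ₂K
    rw [hφ₂W] at this
    exact this.trans k3
  · have h1 : costL M (toW S φs) ≤ C₀ := by
      have := isMinOn_iff.mp hmin φ₁ hφ₁K
      rwa [hφ₁W] at this
    push_neg at hcase
    linarith

/-- The transportation cost (Kantorovich–Rubinstein) norm of a finitely supported
zero-sum function `f` on a metric space: the infimum of costs of transportation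
plans solving `f`. -/
noncomputable def tcCost {M : Type*} [MetricSpace M] (f : M →₀ ℝ) : ℝ :=
  sInf {c : ℝ | ∃ (n : ℕ) (a : Fin n → ℝ) (x y : Fin n → M),
    (∀ i, 0 ≤ a i) ∧
    f = ∑ i, a i • (Finsupp.single (x i) 1 - Finsupp.single (y i) 1) ∧
    c = ∑ i, a i * dist (x i) (y i)}

/-- For every finitely supported zero-sum function `f` on a metric space there is a
transportation plan solving `f` whose cost equals `tcCost f`, i.e. the infimum in the
definition of the transportation cost norm is attained. -/
theorem tcCost_attained {M : Type*} [MetricSpace M] (f : M →₀ ℝ)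
    (hf : f.sum (fun _ r => r) = 0) :
    ∃ (n : ℕ) (a : Fin n → ℝ) (x y : Fin n → M),
      (∀ i, 0 ≤ a i) ∧
      f = ∑ i, a i • (Finsupp.single (x i) 1 - Finsupp.single (y i) 1) ∧
      ∑ i, a i * dist (x i) (y i) = tcCost f := by
  classical
  obtain ⟨W₀, h0, hdiv0, hmin⟩ := exists_min_flow f hf
  obtain ⟨n, a, x, y, ha, hplan, hcost⟩ := exists_plan_of_W W₀ h0
  have hfeq : f = ∑ i, a i • (Finsupp.single (x i) 1 - Finsupp.single (y i) 1) := by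
    rw [hplan, hdiv0]
  refine ⟨n, a, x, y, ha, hfeq, ?_⟩
  rw [hcost]
  have hmem : costL M W₀ ∈ {c : ℝ | ∃ (n : ℕ) (a : Fin n → ℝ) (x y : Fin n → M),
      (∀ i, 0 ≤ a i) ∧
      f = ∑ i, a i • (Finsupp.single (x i) 1 - Finsupp.single (y i) 1) ∧
      c = ∑ i, a i * dist (x i) (y i)} := ⟨n, a, x, y, ha, hfeq, hcost.symm⟩
  have hlb : ∀ c ∈ {c : ℝ | ∃ (n : ℕ) (a : Fin n → ℝ) (x y : Fin n → M),
      (∀ i, 0 ≤ a i) ∧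
      f = ∑ i, a i • (Finsupp.single (x i) 1 - Finsupp.single (y i) 1) ∧
      c = ∑ i, a i * dist (x i) (y i)}, costL M W₀ ≤ c := by
    rintro c ⟨m, b, u, w, hb, hfe, hce⟩
    obtain ⟨W, hWn, hWdiv, hWcost⟩ := exists_W_of_plan m b u w hb
    rw [← hfe] at hWdiv
    rw [hce, ← hWcost]
    exact hmin W hWn hWdiv
  rw [tcCost]
  exact (le_antisymm (csInf_le ⟨costL M W₀, fun c hc => hlb c hc⟩ hmem)
    (le_csInf ⟨_, hmem⟩ hlb)).symm
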